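/- Let n ≥ 2 and m ≥ 1 be integers and let λ₁, …, λ_{n−1} be real numbers such that the polynomial z^{n−1} + λ_{n−1}z^{n−2} + ⋯ + λ₂z + λ₁ is Hurwitz, i.e., every complex root of it has negative real part. Let e : [0,∞) → ℝ^m be (n−1)-times continuously differentiable and define the filtered error s(t) = λ₁e(t) + λ₂e′(t) + ⋯ + λ_{n−1}e^{(n−2)}(t) + e^{(n−1)}(t). If s(t) → 0 as t → ∞, then e^{(i)}(t) → 0 as t → ∞ for every i = 0, 1, …, n−1. -/

import Mathlib

open Filter Polynomial intervalIntegral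


lemma first_order (μ : ℂ) (hμ : μ.re < 0) (f : ℝ → ℂ) (hf : ContDiff ℝ 1 f)
    (hs : Tendsto (fun t => deriv f t - μ * f t) atTop (nhds 0)) :
    Tendsto f atTop (nhds 0) := by
  set s : ℝ → ℂ := fun t => deriv f t - μ * f t with hsdef
  have hd : Differentiable ℝ f := hf.differentiable one_ne_zero
  have hderiv_cont : Continuous (deriv f) := by
    exact (contDiff_one_iff_deriv.mp hf).2
  have hs_cont : Continuous s := hderiv_cont.sub (continuous_const.mul hd.continuous)
  have hg : ∀ τ : ℝ, HasDerivAt (fun t : ℝ => Complex.exp (-(μ * t)) * f t)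
      (Complex.exp (-(μ * τ)) * s τ) τ := by
    intro τ
    have h1 : HasDerivAt (fun t : ℝ => -(μ * (t:ℂ))) (-μ) τ := by
      simpa using ((Complex.ofRealCLM.hasDerivAt (x := τ)).const_mul μ).fun_neg
    have h2 := (h1.cexp).mul (hd τ).hasDerivAt
    refine h2.congr_deriv ?_
    simp only [hsdef]; ring
  set g : ℝ → ℂ := fun t => Complex.exp (-(μ * t)) * f t with hgdef
  -- key representation for T ≤ t
  have key : ∀ T t : ℝ, T ≤ t →
      f t = Complex.exp (μ * t) * g T + ∫ τ in T..t, Complex.exp (μ * (t - τ)) * s τ := by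
    intro T t hTt
    have hint : ∫ τ in T..t, Complex.exp (-(μ * τ)) * s τ = g t - g T :=
      integral_eq_sub_of_hasDerivAt (fun τ _ => hg τ)
        (((Complex.continuous_exp.comp (by continuity)).mul hs_cont).intervalIntegrable T t)
    have : Complex.exp (μ * t) * (g t - g T)
        = ∫ τ in T..t, Complex.exp (μ * (t - τ)) * s τ := by
      rw [← hint, ← intervalIntegral.integral_const_mul]
      congr 1; ext τ
      rw [← mul_assoc, ← Complex.exp_add]
      ring_nf
    rw [← this]
    have h2 : Complex.exp (μ * t) * g t = f t := by
      show Complex.exp (μ * t) * (Complex.exp (-(μ * t)) * f t) = f t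
      rw [← mul_assoc, ← Complex.exp_add, add_neg_cancel, Complex.exp_zero, one_mul]
    linear_combination -h2
  rw [NormedAddCommGroup.tendsto_nhds_zero]
  intro ε hε
  set c := μ.re with hcdef
  have hc : 0 < -c := by linarith
  have hcne : c ≠ 0 := by linarith
  have hε' : (0:ℝ) < ε * (-c) / 4 := by positivity
  obtain ⟨T, hT⟩ : ∃ T, ∀ τ ≥ T, ‖s τ‖ ≤ ε * (-c) / 4 := by
    have h := Metric.tendsto_nhds.mp hs (ε * (-c) / 4) hε'
    rw [eventually_atTop] at h
    obtain ⟨T, hT⟩ := h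
    exact ⟨T, fun τ hτ => by simpa [dist_eq_norm] using (hT τ hτ).le⟩
  -- the exponential integral bound
  have hIbound : ∀ t ≥ T, |∫ τ in T..t, Real.exp (c * (t - τ))| ≤ 1 / (-c) := by
    intro t ht
    have hF : ∀ τ ∈ Set.uIcc T t, HasDerivAt (fun τ => -(1/c) * Real.exp (c * (t - τ)))
        (Real.exp (c * (t - τ))) τ := by
      intro τ _
      have h1 : HasDerivAt (fun τ : ℝ => c * (t - τ)) (-c) τ := by
        simpa using ((hasDerivAt_id τ).const_sub t).const_mul c
      have := (h1.exp).const_mul (-(1/c))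
      refine this.congr_deriv ?_
      field_simp
    have hval : ∫ τ in T..t, Real.exp (c * (t - τ))
        = -(1/c) * Real.exp (c * (t - t)) - -(1/c) * Real.exp (c * (t - T)) :=
      integral_eq_sub_of_hasDerivAt hF
        ((Real.continuous_exp.comp (by continuity)).intervalIntegrable T t)
    simp only [sub_self, mul_zero, Real.exp_zero] at hval
    rw [hval, abs_le]
    have hE0 := Real.exp_pos (c * (t - T))
    have hE1 : Real.exp (c * (t - T)) ≤ 1 := by
      apply Real.exp_le_one_iff.mpr
      nlinarith
    have hinv : 0 < -(1/c) := by
      rw [neg_pos]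
      exact div_neg_of_pos_of_neg one_pos hμ
    constructor <;> nlinarith
  -- norm bound for t ≥ T
  have hbound : ∀ t ≥ T, ‖f t‖ ≤ Real.exp (c * t) * ‖g T‖ + ε / 4 := by
    intro t ht
    rw [key T t ht]
    refine (norm_add_le _ _).trans (add_le_add ?_ ?_)
    · rw [norm_mul, Complex.norm_exp]
      simp [Complex.mul_re, hcdef]
    · have h1 : ‖∫ τ in T..t, Complex.exp (μ * ((t:ℝ) - τ)) * s τ‖
          ≤ |∫ τ in T..t, Real.exp (c * (t - τ)) * (ε * (-c) / 4)| := by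
        apply intervalIntegral.norm_integral_le_abs_of_norm_le
        · rw [Filter.eventually_iff_exists_mem]
          refine ⟨Set.uIoc T t, MeasureTheory.self_mem_ae_restrict measurableSet_uIoc, fun τ hτ => ?_⟩
          rw [Set.uIoc_of_le ht] at hτ
          rw [norm_mul, Complex.norm_exp]
          have : (μ * ((t:ℝ) - (τ:ℝ))).re = c * (t - τ) := by
            simp [Complex.mul_re, hcdef]
          rw [this]
          exact mul_le_mul_of_nonneg_left (hT τ hτ.1.le) (Real.exp_pos _).le
        · exact ((Real.continuous_exp.comp (by continuity)).mul continuous_const).intervalIntegrable T t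
      refine h1.trans ?_
      rw [intervalIntegral.integral_mul_const, abs_mul]
      have h2 : |ε * (-c) / 4| = ε * (-c) / 4 := abs_of_pos hε'
      rw [h2]
      calc |∫ τ in T..t, Real.exp (c * (t - τ))| * (ε * (-c) / 4)
          ≤ (1 / (-c)) * (ε * (-c) / 4) :=
            mul_le_mul_of_nonneg_right (hIbound t ht) hε'.le
        _ = ε / 4 := by field_simp
  -- conclude
  have hexp : Tendsto (fun t => Real.exp (c * t) * ‖g T‖) atTop (nhds 0) := by
    have h1 : Tendsto (fun t : ℝ => c * t) atTop atBot := by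
      apply Tendsto.const_mul_atTop_of_neg (by linarith : c < 0) tendsto_id
    have := (Real.tendsto_exp_atBot.comp h1).mul_const ‖g T‖
    simpa using this
  have hev : ∀ᶠ t in atTop, Real.exp (c * t) * ‖g T‖ < ε / 2 :=
    hexp.eventually_lt_const (by linarith)
  filter_upwards [eventually_ge_atTop T, hev] with t ht1 ht2
  calc ‖f t‖ ≤ Real.exp (c * t) * ‖g T‖ + ε / 4 := hbound t ht1
    _ < ε / 2 + ε / 4 := by linarith
    _ < ε := by linarith


noncomputable def opL : List ℂ → (ℝ → ℂ) → (ℝ → ℂ)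
  | [], f => f
  | μ :: L, f => fun t => deriv (opL L f) t - μ * opL L f t

lemma diff_iter {f : ℝ → ℂ} {N i : ℕ} (hf : ContDiff ℝ (N : ℕ∞) f) (hi : i < N) :
    Differentiable ℝ (iteratedDeriv i f) :=
  hf.differentiable_iteratedDeriv i (by exact_mod_cast hi)

lemma contDiff_iter {f : ℝ → ℂ} {N i k : ℕ} (hf : ContDiff ℝ (N : ℕ∞) f) (hik : i + k ≤ N) :
    ContDiff ℝ (k : ℕ∞) (iteratedDeriv i f) := by
  rw [iteratedDeriv_eq_iterate]
  exact ContDiff.iterate_deriv' k i (hf.of_le (by exact_mod_cast (show k + i ≤ N by omega)))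

lemma listprod_monic (L : List ℂ) :
    ((L.map fun μ => X - C μ).prod).Monic ∧
      ((L.map fun μ => X - C μ).prod).natDegree = L.length := by
  induction L with
  | nil => simp [monic_one]
  | cons μ L ih =>
    rw [List.map_cons, List.prod_cons]
    refine ⟨(monic_X_sub_C μ).mul ih.1, ?_⟩
    rw [(monic_X_sub_C μ).natDegree_mul ih.1, natDegree_X_sub_C, ih.2, List.length_cons]
    omega

lemma opL_eq : ∀ (L : List ℂ) (f : ℝ → ℂ), ContDiff ℝ (L.length : ℕ∞) f →
    ∀ t, opL L f t = ∑ i ∈ Finset.range (L.length + 1),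
      ((L.map fun μ => X - C μ).prod).coeff i * iteratedDeriv i f t
  | [], f, hf, t => by simp [opL]
  | μ :: L, f, hf, t => by
    set ℓ := L.length with hl
    set Q := (L.map fun μ => X - C μ).prod with hQ
    have hQdeg : Q.natDegree = ℓ := (listprod_monic L).2
    have hfl : ContDiff ℝ (ℓ : ℕ∞) f := hf.of_le (by exact_mod_cast Nat.le_succ ℓ)
    have IH := opL_eq L f hfl
    have hdiff : ∀ i, i ≤ ℓ → Differentiable ℝ (iteratedDeriv i f) := fun i hi =>
      diff_iter hf (by simpa using Nat.lt_succ_of_le hi)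
    have hderiv : deriv (opL L f) t
        = ∑ i ∈ Finset.range (ℓ + 1), Q.coeff i * iteratedDeriv (i + 1) f t := by
      have : opL L f = fun t => ∑ i ∈ Finset.range (ℓ + 1), Q.coeff i * iteratedDeriv i f t :=
        funext IH
      rw [this, deriv_fun_sum (fun i hi => ((hdiff i
            (Nat.lt_succ_iff.mp (Finset.mem_range.mp hi))) t).const_mul _)]
      refine Finset.sum_congr rfl fun i hi => ?_
      rw [deriv_const_mul _ ((hdiff i (Nat.lt_succ_iff.mp (Finset.mem_range.mp hi))) t),
        ← iteratedDeriv_succ]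
    show deriv (opL L f) t - μ * opL L f t = _
    rw [hderiv, IH t]
    have hP : ((μ :: L).map fun μ => X - C μ).prod = Q * (X - C μ) := by
      rw [List.map_cons, List.prod_cons, mul_comm]
    rw [hP]
    have hlen : (μ :: L).length = ℓ + 1 := rfl
    rw [hlen]
    have hsplit := Finset.sum_range_succ' (fun i => (Q * (X - C μ)).coeff i * iteratedDeriv i f t) (ℓ + 1)
    rw [hsplit]
    have hc0 : (Q * (X - C μ)).coeff 0 = Q.coeff 0 * (-μ) := by
      rw [mul_coeff_zero]; simp
    have hcs : ∀ j, (Q * (X - C μ)).coeff (j + 1) = Q.coeff j - μ * Q.coeff (j + 1) :=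
      fun j => by rw [coeff_mul_X_sub_C]; ring
    simp only [hcs, hc0, iteratedDeriv_zero, sub_mul, Finset.sum_sub_distrib]
    have htop : Q.coeff (ℓ + 1) = 0 := coeff_eq_zero_of_natDegree_lt (by omega)
    have hT : ∑ j ∈ Finset.range (ℓ + 1), μ * Q.coeff (j + 1) * iteratedDeriv (j + 1) f t
        = μ * ∑ j ∈ Finset.range ℓ, Q.coeff (j + 1) * iteratedDeriv (j + 1) f t := by
      rw [Finset.sum_range_succ, htop, Finset.mul_sum]
      simp [mul_assoc]
    have hsplit2 := Finset.sum_range_succ' (fun i => Q.coeff i * iteratedDeriv i f t) ℓ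
    rw [hT, hsplit2, iteratedDeriv_zero]
    ring

lemma opL_contDiff_one (L : List ℂ) (f : ℝ → ℂ)
    (hf : ContDiff ℝ ((L.length + 1 : ℕ) : ℕ∞) f) :
    ContDiff ℝ 1 (opL L f) := by
  have heq : opL L f = fun t => ∑ i ∈ Finset.range (L.length + 1),
      ((L.map fun μ => X - C μ).prod).coeff i * iteratedDeriv i f t :=
    funext (opL_eq L f (hf.of_le (by exact_mod_cast Nat.le_succ _)))
  rw [heq]
  apply ContDiff.sum
  intro i hi
  have hi' : i + 1 ≤ L.length + 1 := Nat.succ_le_succ (Nat.lt_succ_iff.mp (Finset.mem_range.mp hi))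
  exact contDiff_const.mul (contDiff_iter hf hi')

lemma list_decay : ∀ (L : List ℂ), (∀ μ ∈ L, μ.re < 0) → ∀ (f : ℝ → ℂ),
    ContDiff ℝ (L.length : ℕ∞) f →
    Tendsto (opL L f) atTop (nhds 0) →
    ∀ i ≤ L.length, Tendsto (iteratedDeriv i f) atTop (nhds 0)
  | [], _, f, _, h0, i, hi => by
    have : i = 0 := Nat.le_zero.mp hi
    subst this
    simpa [iteratedDeriv_zero, opL] using h0
  | μ :: L, hL, f, hf, h0, i, hi => by
    set ℓ := L.length with hl
    have hflen : ContDiff ℝ ((ℓ + 1 : ℕ) : ℕ∞) f := hf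
    have hg1 : ContDiff ℝ 1 (opL L f) := opL_contDiff_one L f hflen
    have hglim : Tendsto (opL L f) atTop (nhds 0) := by
      refine first_order μ (hL μ (by simp)) _ hg1 ?_
      exact h0
    have hfl : ContDiff ℝ (ℓ : ℕ∞) f := hf.of_le (by exact_mod_cast Nat.le_succ ℓ)
    have IH := list_decay L (fun ν hν => hL ν (by simp [hν])) f hfl hglim
    rcases Nat.lt_succ_iff_lt_or_eq.mp (Nat.lt_succ_of_le hi) with h | h
    · exact IH i (Nat.lt_succ_iff.mp h)
    · subst h
      set P := ((μ :: L).map fun ν => X - C ν).prod with hP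
      have hPdeg : P.natDegree = ℓ + 1 := by
        exact (listprod_monic (μ :: L)).2
      have hPmonic : P.Monic := (listprod_monic (μ :: L)).1
      have heq : ∀ t, iteratedDeriv (ℓ + 1) f t
          = opL (μ :: L) f t - ∑ i ∈ Finset.range (ℓ + 1), P.coeff i * iteratedDeriv i f t := by
        intro t
        have := opL_eq (μ :: L) f hf t
        rw [show (μ :: L).length = ℓ + 1 from rfl] at this
        rw [Finset.sum_range_succ] at this
        have hctop : P.coeff (ℓ + 1) = 1 := by
          have := hPmonic
          rw [Monic, leadingCoeff, hPdeg] at this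
          exact this
        rw [hctop, one_mul] at this
        rw [this]
        ring
      have : Tendsto (fun t => opL (μ :: L) f t
          - ∑ i ∈ Finset.range (ℓ + 1), P.coeff i * iteratedDeriv i f t) atTop (nhds 0) := by
        have hsum : Tendsto (fun t => ∑ i ∈ Finset.range (ℓ + 1),
            P.coeff i * iteratedDeriv i f t) atTop (nhds 0) := by
          have := tendsto_finset_sum (Finset.range (ℓ + 1))
            (fun i hi => (IH i (Nat.lt_succ_iff.mp (Finset.mem_range.mp hi))).const_mul
              (P.coeff i))
          simpa using this
        simpa using h0.sub hsum
      exact this.congr (fun t => (heq t).symm)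

lemma clm_iteratedDeriv {E F : Type*} [NormedAddCommGroup E] [NormedSpace ℝ E]
    [NormedAddCommGroup F] [NormedSpace ℝ F]
    (φ : E →L[ℝ] F) (f : ℝ → E) {N : ℕ} (hf : ContDiff ℝ (N : ℕ∞) f)
    {i : ℕ} (hi : i ≤ N) (t : ℝ) :
    iteratedDeriv i (fun x => φ (f x)) t = φ (iteratedDeriv i f t) := by
  rw [iteratedDeriv_eq_iteratedFDeriv, iteratedDeriv_eq_iteratedFDeriv]
  rw [show (fun x => φ (f x)) = φ ∘ f from rfl,
    φ.iteratedFDeriv_comp_left hf.contDiffAt (by exact_mod_cast hi)]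
  rfl

/-- Lemma 3, after Song–Wang 2017.
Let `n ≥ 2`, `m ≥ 1`, and let `λ₁, …, λ_{n−1}` (here `lam 0, …, lam (n-2)`) be such
that `z^{n−1} + λ_{n−1}z^{n−2} + ⋯ + λ₂z + λ₁` is Hurwitz (every complex root has
negative real part).  Let `e : [0,∞) → ℝ^m` be `(n−1)`-times continuously
differentiable and let
`s(t) = λ₁e(t) + λ₂e′(t) + ⋯ + λ_{n−1}e^{(n−2)}(t) + e^{(n−1)}(t)`.
If `s(t) → 0` as `t → ∞`, then `e^{(i)}(t) → 0` as `t → ∞` for every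
`i = 0, 1, …, n−1`. -/
theorem filtered_error_convergence
    (n m : ℕ) (hn : 2 ≤ n) (hm : 1 ≤ m)
    (lam : Fin (n - 1) → ℝ)
    (hHurwitz : ∀ z : ℂ,
        z ^ (n - 1) + ∑ j : Fin (n - 1), (lam j : ℂ) * z ^ (j : ℕ) = 0 → z.re < 0)
    (e : ℝ → EuclideanSpace ℝ (Fin m))
    (he : ContDiff ℝ (n - 1 : ℕ) e)
    (s : ℝ → EuclideanSpace ℝ (Fin m))
    (hs_def : ∀ t, s t =
        (∑ j : Fin (n - 1), lam j • iteratedDeriv (j : ℕ) e t) + iteratedDeriv (n - 1) e t)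
    (hs_lim : Tendsto s atTop (nhds 0)) :
    ∀ i ≤ n - 1, Tendsto (iteratedDeriv i e) atTop (nhds 0) := by
  -- the polynomial
  set P : ℂ[X] := X ^ (n - 1) + ∑ j : Fin (n - 1), C (lam j : ℂ) * X ^ (j : ℕ) with hPdef
  have hPs_deg : (∑ j : Fin (n - 1), C (lam j : ℂ) * X ^ (j : ℕ)).degree < ((n - 1 : ℕ) : WithBot ℕ) := by
    apply lt_of_le_of_lt (Polynomial.degree_sum_le _ _)
    rw [Finset.sup_lt_iff (by exact_mod_cast WithBot.bot_lt_coe (n - 1 : ℕ))]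
    intro j _
    apply lt_of_le_of_lt (degree_mul_le _ _)
    have h1 : (C (lam j : ℂ)).degree ≤ 0 := degree_C_le
    have h2 : ((X : ℂ[X]) ^ (j : ℕ)).degree = ((j : ℕ) : WithBot ℕ) := degree_X_pow _
    have := add_le_add h1 (le_of_eq h2)
    refine lt_of_le_of_lt this ?_
    rw [zero_add]
    exact_mod_cast j.2
  have hPmonic : P.Monic := monic_X_pow_add hPs_deg
  have hPdeg : P.natDegree = (n - 1) := by
    have hdeg : P.degree = ((n - 1 : ℕ) : WithBot ℕ) := by
      rw [hPdef]
      rw [degree_add_eq_left_of_degree_lt (by rw [degree_X_pow]; exact hPs_deg)]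
      exact degree_X_pow (n - 1)
    exact natDegree_eq_of_degree_eq_some hdeg
  have hPne : P ≠ 0 := hPmonic.ne_zero
  -- eval formula
  have hPeval : ∀ z : ℂ, P.eval z = z ^ (n - 1) + ∑ j : Fin (n - 1), (lam j : ℂ) * z ^ (j : ℕ) := by
    intro z
    rw [hPdef]
    simp [eval_finset_sum]
  -- roots
  have hsplits : P.Splits := IsAlgClosed.splits P
  set L : List ℂ := P.roots.toList with hL
  have hLlen : L.length = (n - 1) := by
    rw [hL, Multiset.length_toList, splits_iff_card_roots.mp hsplits, hPdeg]
  have hLprod : (L.map fun μ => X - C μ).prod = P := by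
    have h1 := hsplits.eq_prod_roots_of_monic hPmonic
    rw [hL]
    rw [← Multiset.prod_coe, ← Multiset.map_coe, Multiset.coe_toList]
    exact h1.symm
  have hLneg : ∀ μ ∈ L, μ.re < 0 := by
    intro μ hμ
    rw [hL, Multiset.mem_toList] at hμ
    have : P.eval μ = 0 := (mem_roots hPne).mp hμ
    rw [hPeval] at this
    exact hHurwitz μ this
  -- coefficients of P
  have hcoeff_lt : ∀ i (h : i < n - 1), P.coeff i = ((lam ⟨i, h⟩ : ℝ) : ℂ) := by
    intro i h
    rw [hPdef, coeff_add, coeff_X_pow, if_neg (by omega), zero_add, finset_sum_coeff]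
    have : ∀ j : Fin (n - 1), (C ((lam j : ℝ) : ℂ) * X ^ (j : ℕ)).coeff i
        = if j = ⟨i, h⟩ then ((lam ⟨i, h⟩ : ℝ) : ℂ) else 0 := by
      intro j
      rw [coeff_C_mul, coeff_X_pow]
      by_cases hji : j = ⟨i, h⟩
      · subst hji; simp
      · rw [if_neg hji, if_neg (by
          intro hc
          apply hji
          apply Fin.ext
          simp [← hc]), mul_zero]
    rw [Finset.sum_congr rfl fun j _ => this j]
    simp
  have hcoeff_top : P.coeff (n - 1) = 1 := by
    have := hPmonic
    rw [Monic, leadingCoeff, hPdeg] at this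
    exact this
  -- coordinate reduction
  intro i hi
  have key : ∀ x : Fin m,
      Tendsto (fun t => iteratedDeriv i e t x) atTop (nhds 0) := by
    intro x
    set φ : EuclideanSpace ℝ (Fin m) →L[ℝ] ℂ :=
      Complex.ofRealCLM.comp (EuclideanSpace.proj x) with hφ
    set f : ℝ → ℂ := fun t => φ (e t) with hfdef
    have hfc : ContDiff ℝ ((n - 1 : ℕ) : ℕ∞) f := φ.contDiff.comp he
    have hiter : ∀ (r : ℕ), r ≤ n - 1 → ∀ t, iteratedDeriv r f t = φ (iteratedDeriv r e t) :=
      fun r hr t => clm_iteratedDeriv φ e he hr t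
    have hopL : ∀ t, opL L f t = φ (s t) := by
      intro t
      rw [opL_eq L f (by rw [hLlen]; exact_mod_cast hfc) t]
      have hstep : ∀ i' ∈ Finset.range (L.length + 1),
          ((L.map fun μ => X - C μ).prod).coeff i' * iteratedDeriv i' f t
            = P.coeff i' * φ (iteratedDeriv i' e t) := by
        intro i' hi'
        rw [hLprod, hiter i' (by
          have := Finset.mem_range.mp hi'
          omega) t]
      rw [Finset.sum_congr rfl hstep, hLlen, hs_def t, map_add, map_sum,
        Finset.sum_range_succ, hcoeff_top, one_mul]
      congr 1
      rw [Finset.sum_range fun i' => P.coeff i' * φ (iteratedDeriv i' e t)]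
      refine Finset.sum_congr rfl fun j _ => ?_
      rw [hcoeff_lt (j : ℕ) j.2, map_smul]
      simp only [Fin.eta]
      rw [Complex.real_smul]
    have h2 : Tendsto (opL L f) atTop (nhds 0) := by
      have h := (φ.continuous.tendsto 0).comp hs_lim
      rw [map_zero] at h
      exact h.congr fun t => (hopL t).symm
    have h3 := list_decay L hLneg f (by rw [hLlen]; exact_mod_cast hfc) h2 i (by omega)
    have h4 : Tendsto (fun t => φ (iteratedDeriv i e t)) atTop (nhds 0) :=
      h3.congr (fun t => hiter i hi t)
    have h5 := (Complex.continuous_re.tendsto 0).comp h4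
    simpa [hφ, Function.comp_def] using h5
  -- reassemble
  let E := PiLp.continuousLinearEquiv 2 ℝ (fun _ : Fin m => ℝ)
  have hE : Tendsto (fun t => E (iteratedDeriv i e t)) atTop (nhds 0) := by
    rw [tendsto_pi_nhds]
    intro x
    simpa [E, PiLp.coe_continuousLinearEquiv] using key x
  have h6 := ((E.symm : (∀ _ : Fin m, ℝ) →L[ℝ] EuclideanSpace ℝ (Fin m)).continuous.tendsto 0).comp hE
  rw [map_zero] at h6
  exact h6.congr fun t => by simp
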